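/- arXiv:math/0410158 — 2 statements merged into one kernel-verified Lean document; each statement's English description precedes it below -/
import Mathlib

section
/- For any $k = (k_1,k_2) \in \mathbb{Z}^2$ with $|k| \geq 2$, the series $\sum_{h \in \mathbb{Z}^2, h \neq 0, h \neq k} \frac{1}{|h|^2 |k-h|^2}$ is bounded above by $c \frac{\log |k|}{|k|^2}$ for some absolute constant $c > 0$ independent of $k$. -/
open scoped Real
set_option maxHeartbeats 1000000

/-- Euclidean norm of a lattice point. -/
noncomputable def znorm (k : ℤ × ℤ) : ℝ := Real.sqrt ((k.1 : ℝ)^2 + (k.2 : ℝ)^2)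

lemma znorm_nonneg (k : ℤ × ℤ) : 0 ≤ znorm k := Real.sqrt_nonneg _

lemma znorm_sq (k : ℤ × ℤ) : znorm k ^ 2 = (k.1 : ℝ)^2 + (k.2 : ℝ)^2 :=
  Real.sq_sqrt (by positivity)

lemma znorm_eq_cabs (p : ℤ × ℤ) : znorm p = ‖(⟨(p.1 : ℝ), (p.2 : ℝ)⟩ : ℂ)‖ := by
  simp [znorm, Complex.norm_def, Complex.normSq_mk, sq]

lemma znorm_triangle (a b : ℤ × ℤ) : znorm (a + b) ≤ znorm a + znorm b := by
  have h : (⟨((a+b).1 : ℝ), ((a+b).2 : ℝ)⟩ : ℂ) = ⟨(a.1 : ℝ), (a.2 : ℝ)⟩ + ⟨(b.1 : ℝ), (b.2 : ℝ)⟩ := by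
    apply Complex.ext <;> simp
  rw [znorm_eq_cabs, znorm_eq_cabs, znorm_eq_cabs, h]
  exact norm_add_le _ _

lemma znorm_neg (a : ℤ × ℤ) : znorm (-a) = znorm a := by
  simp [znorm]

lemma int_sq_ge {z : ℤ} (hz : z ≠ 0) : (1:ℝ) ≤ (z:ℝ)^2 := by
  have h1 : (1:ℤ) ≤ z^2 := by nlinarith [Int.one_le_abs hz, abs_nonneg z, sq_abs z]
  exact_mod_cast h1

lemma one_le_znorm {h : ℤ × ℤ} (hh : h ≠ 0) : 1 ≤ znorm h := by
  have h1 : h.1 ≠ 0 ∨ h.2 ≠ 0 := by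
    by_contra hc; push_neg at hc; exact hh (Prod.ext hc.1 hc.2)
  have key : (1:ℝ) ≤ (h.1 : ℝ)^2 + (h.2 : ℝ)^2 := by
    rcases h1 with h1 | h1
    · nlinarith [int_sq_ge h1, sq_nonneg ((h.2:ℝ))]
    · nlinarith [int_sq_ge h1, sq_nonneg ((h.1:ℝ))]
  calc (1:ℝ) = Real.sqrt 1 := by simp
  _ ≤ _ := Real.sqrt_le_sqrt key

lemma znorm_pos {h : ℤ × ℤ} (hh : h ≠ 0) : 0 < znorm h :=
  lt_of_lt_of_le one_pos (one_le_znorm hh)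

/-- sup-norm radius -/
def zr (h : ℤ × ℤ) : ℕ := max h.1.natAbs h.2.natAbs

lemma zr_le_znorm (h : ℤ × ℤ) : (zr h : ℝ) ≤ znorm h := by
  have h1 : ((h.1.natAbs : ℝ))^2 = (h.1 : ℝ)^2 := by
    simp [Nat.cast_natAbs, sq_abs]
  have h2 : ((h.2.natAbs : ℝ))^2 = (h.2 : ℝ)^2 := by
    simp [Nat.cast_natAbs, sq_abs]
  have : ((zr h : ℝ))^2 ≤ (h.1 : ℝ)^2 + (h.2 : ℝ)^2 := by
    rcases max_cases h.1.natAbs h.2.natAbs with ⟨he, _⟩ | ⟨he, _⟩ <;> rw [zr, he]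
    · nlinarith [sq_nonneg ((h.2:ℝ))]
    · nlinarith [sq_nonneg ((h.1:ℝ))]
  calc (zr h : ℝ) = Real.sqrt ((zr h:ℝ)^2) := by rw [Real.sqrt_sq (by positivity)]
  _ ≤ _ := Real.sqrt_le_sqrt this

lemma znorm_le_two_zr (h : ℤ × ℤ) : znorm h ≤ 2 * zr h := by
  have h1 : ((h.1 : ℝ))^2 ≤ ((zr h : ℝ))^2 := by
    have : h.1.natAbs ≤ zr h := le_max_left _ _
    have h2 : |(h.1:ℝ)| ≤ (zr h : ℝ) := by
      rw [← Int.cast_abs, Int.abs_eq_natAbs]; exact_mod_cast this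
    nlinarith [abs_nonneg (h.1:ℝ), sq_abs (h.1:ℝ)]
  have h2 : ((h.2 : ℝ))^2 ≤ ((zr h : ℝ))^2 := by
    have : h.2.natAbs ≤ zr h := le_max_right _ _
    have h2 : |(h.2:ℝ)| ≤ (zr h : ℝ) := by
      rw [← Int.cast_abs, Int.abs_eq_natAbs]; exact_mod_cast this
    nlinarith [abs_nonneg (h.2:ℝ), sq_abs (h.2:ℝ)]
  have : (h.1 : ℝ)^2 + (h.2 : ℝ)^2 ≤ (2 * zr h)^2 := by nlinarith [Nat.cast_nonneg (α := ℝ) (zr h)]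
  calc znorm h ≤ Real.sqrt ((2 * zr h)^2) := Real.sqrt_le_sqrt this
  _ = 2 * zr h := Real.sqrt_sq (by positivity)

lemma one_le_zr {h : ℤ × ℤ} (hh : h ≠ 0) : 1 ≤ zr h := by
  by_contra hc
  push_neg at hc
  interval_cases hz : zr h
  · apply hh
    have := Nat.max_eq_zero_iff.mp hz
    have e1 : h.1 = 0 := Int.natAbs_eq_zero.mp this.1
    have e2 : h.2 = 0 := Int.natAbs_eq_zero.mp this.2
    exact Prod.ext e1 e2

lemma znorm_zero : znorm 0 = 0 := by simp [znorm]



open Finset in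
lemma radial_sum_bound (w : ℕ → ℝ) (hw0 : w 0 = 0) (hw : ∀ n, 0 ≤ w n) {B : ℝ}
    (hB : ∀ N : ℕ, ∑ n ∈ Finset.range (N+1), (8*n : ℝ) * w n ≤ B) :
    Summable (fun h : ℤ × ℤ => w (zr h)) ∧ ∑' h : ℤ × ℤ, w (zr h) ≤ B := by
  have key : ∀ u : Finset (ℤ × ℤ), ∑ h ∈ u, w (zr h) ≤ B := by
    intro u
    set N := u.sup zr with hN
    have hsub : u ⊆ (Finset.range (N+1)).biUnion (fun n => (box n : Finset (ℤ × ℤ))) := by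
      intro x hx
      refine Finset.mem_biUnion.mpr ⟨zr x, ?_, ?_⟩
      · exact Finset.mem_range.mpr (Nat.lt_succ_of_le (Finset.le_sup hx))
      · exact Int.mem_box.mpr rfl
    have hdisj : ∀ n₁ ∈ Finset.range (N+1), ∀ n₂ ∈ Finset.range (N+1), n₁ ≠ n₂ →
        Disjoint (box n₁ : Finset (ℤ × ℤ)) (box n₂) := by
      intro n₁ _ n₂ _ hne
      refine Finset.disjoint_left.mpr fun x hx1 hx2 => hne ?_
      rw [← Int.mem_box.mp hx1, ← Int.mem_box.mp hx2]
    calc ∑ h ∈ u, w (zr h)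
        ≤ ∑ h ∈ (Finset.range (N+1)).biUnion (fun n => (box n : Finset (ℤ × ℤ))), w (zr h) :=
          Finset.sum_le_sum_of_subset_of_nonneg hsub (fun _ _ _ => hw _)
      _ = ∑ n ∈ Finset.range (N+1), ∑ h ∈ (box n : Finset (ℤ × ℤ)), w (zr h) :=
          Finset.sum_biUnion hdisj
      _ = ∑ n ∈ Finset.range (N+1), (8*n : ℝ) * w n := by
          refine Finset.sum_congr rfl fun n _ => ?_
          have : ∀ h ∈ (box n : Finset (ℤ × ℤ)), w (zr h) = w n := by
            intro h hh; rw [show zr h = n from Int.mem_box.mp hh]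
          rw [Finset.sum_congr rfl this, Finset.sum_const, nsmul_eq_mul]
          rcases Nat.eq_zero_or_pos n with rfl | hn
          · simp [hw0]
          · rw [Int.card_box hn.ne']; push_cast; ring
      _ ≤ B := hB N
  have hsum : Summable (fun h : ℤ × ℤ => w (zr h)) :=
    summable_of_sum_le (fun h => hw _) key
  exact ⟨hsum, Summable.tsum_le_of_sum_le hsum key⟩


lemma harmonic_partial_bound {R : ℝ} (hR : 2 ≤ R) (N : ℕ) :
    ∑ n ∈ Finset.range (N+1),
      (8*n : ℝ) * (if 1 ≤ n ∧ (n:ℝ) ≤ R then 1/(n:ℝ)^2 else 0) ≤ 8 * (1 + Real.log R) := by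
  set M := ⌊R⌋₊ with hM
  have hM1 : 1 ≤ M := Nat.le_floor (by exact_mod_cast (by linarith : (1:ℝ) ≤ R))
  have step1 : ∀ n : ℕ, (8*n : ℝ) * (if 1 ≤ n ∧ (n:ℝ) ≤ R then 1/(n:ℝ)^2 else 0)
      = if 1 ≤ n ∧ (n:ℝ) ≤ R then 8/(n:ℝ) else 0 := by
    intro n
    split
    · next hc =>
      have hn : (0:ℝ) < n := by exact_mod_cast hc.1
      field_simp
    · ring
  rw [Finset.sum_congr rfl (fun n _ => step1 n), ← Finset.sum_filter]
  have hsub : (Finset.range (N+1)).filter (fun n : ℕ => 1 ≤ n ∧ (n:ℝ) ≤ R) ⊆ Finset.Icc 1 M := by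
    intro n hn
    rw [Finset.mem_filter] at hn
    exact Finset.mem_Icc.mpr ⟨hn.2.1, Nat.le_floor hn.2.2⟩
  calc ∑ n ∈ (Finset.range (N+1)).filter (fun n : ℕ => 1 ≤ n ∧ (n:ℝ) ≤ R), 8/(n:ℝ)
      ≤ ∑ n ∈ Finset.Icc 1 M, 8/(n:ℝ) :=
        Finset.sum_le_sum_of_subset_of_nonneg hsub (fun n _ _ => by positivity)
    _ = 8 * ∑ n ∈ Finset.Icc 1 M, ((n:ℝ))⁻¹ := by
        rw [Finset.mul_sum]; exact Finset.sum_congr rfl fun n _ => by rw [div_eq_mul_inv]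
    _ = 8 * (harmonic M : ℝ) := by
        rw [harmonic_eq_sum_Icc]; push_cast; ring
    _ ≤ 8 * (1 + Real.log M) := by
        have := harmonic_le_one_add_log M
        linarith
    _ ≤ 8 * (1 + Real.log R) := by
        have hlog : Real.log M ≤ Real.log R :=
          Real.log_le_log (by exact_mod_cast hM1) (Nat.floor_le (by linarith))
        linarith

lemma tail_geom (n0 : ℕ) (h1 : 1 ≤ n0) (N : ℕ) :
    ∑ n ∈ Finset.range (N+1), (if n0 ≤ n then 8/(n:ℝ)^3 else 0) ≤ 12/(n0:ℝ)^2 := by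
  have hn0r : (0:ℝ) < n0 := by exact_mod_cast h1
  have main : ∀ N : ℕ, ∑ n ∈ Finset.range (N+1), (if n0 ≤ n then 8/(n:ℝ)^3 else 0)
      ≤ if n0 ≤ N then 12/(n0:ℝ)^2 - 4/(N:ℝ)^2 else 0 := by
    intro N
    induction N with
    | zero =>
      have h0 : ¬ n0 ≤ 0 := by omega
      simp [h0]
    | succ N ih =>
      rw [Finset.sum_range_succ]
      have hcast : ((N+1 : ℕ):ℝ) = (N:ℝ)+1 := by push_cast; ring
      by_cases hc : n0 ≤ N
      · rw [if_pos (by omega : n0 ≤ N + 1), if_pos (by omega : n0 ≤ N + 1), hcast]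
        rw [if_pos hc] at ih
        have hNpos : (1:ℝ) ≤ (N:ℝ) := by exact_mod_cast le_trans h1 hc
        have key : 8/((N:ℝ)+1)^3 ≤ 4/(N:ℝ)^2 - 4/((N:ℝ)+1)^2 := by
          rw [div_sub_div _ _ (by positivity) (by positivity),
            div_le_div_iff₀ (by positivity) (by positivity)]
          nlinarith [hNpos]
        linarith
      · by_cases hc' : n0 = N + 1
        · rw [if_neg hc] at ih
          rw [if_pos (by omega : n0 ≤ N + 1), if_pos (by omega : n0 ≤ N + 1), hcast]
          have h2 : ((N:ℝ)+1) = (n0:ℝ) := by exact_mod_cast (hcast ▸ congrArg (Nat.cast (R := ℝ)) hc'.symm)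
          rw [h2]
          have key : 8/(n0:ℝ)^3 ≤ 8/(n0:ℝ)^2 := by
            apply div_le_div_of_nonneg_left (by norm_num) (by positivity)
            calc (n0:ℝ)^2 = (n0:ℝ)^2 * 1 := by ring
            _ ≤ (n0:ℝ)^2 * (n0:ℝ) := by
                apply mul_le_mul_of_nonneg_left (by exact_mod_cast h1) (by positivity)
            _ = (n0:ℝ)^3 := by ring
          have h12 : 12/(n0:ℝ)^2 - 4/(n0:ℝ)^2 = 8/(n0:ℝ)^2 := by ring
          linarith
        · rw [if_neg hc] at ih
          rw [if_neg (by omega : ¬ n0 ≤ N + 1), if_neg (by omega : ¬ n0 ≤ N + 1)]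
          linarith
  calc ∑ n ∈ Finset.range (N+1), (if n0 ≤ n then 8/(n:ℝ)^3 else 0)
      ≤ if n0 ≤ N then 12/(n0:ℝ)^2 - 4/(N:ℝ)^2 else 0 := main N
    _ ≤ 12/(n0:ℝ)^2 := by
        split
        · next hc =>
          have hN : (0:ℝ) < (N:ℝ) := by exact_mod_cast lt_of_lt_of_le h1 hc
          have : 0 < 4/(N:ℝ)^2 := by positivity
          linarith
        · positivity

lemma tail_partial_bound {K : ℝ} (hK : 2 ≤ K) (N : ℕ) :
    ∑ n ∈ Finset.range (N+1),
      (8*n : ℝ) * (if K/2 < (n:ℝ) then 1/(n:ℝ)^4 else 0) ≤ 48 / K^2 := by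
  have hK2 : (0:ℝ) < K/2 := by linarith
  set n0 : ℕ := ⌊K/2⌋₊ + 1 with hn0
  have hn0K : K/2 < (n0:ℝ) := by rw [hn0]; push_cast; exact Nat.lt_floor_add_one (K/2)
  have hn0pos : 1 ≤ n0 := Nat.le_add_left 1 _
  have hcond : ∀ n : ℕ, (K/2 < (n:ℝ)) ↔ n0 ≤ n := by
    intro n
    rw [hn0, Nat.add_one_le_iff]
    exact (Nat.floor_lt hK2.le).symm
  have step1 : ∀ n : ℕ, (8*n : ℝ) * (if K/2 < (n:ℝ) then 1/(n:ℝ)^4 else 0)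
      = if n0 ≤ n then 8/(n:ℝ)^3 else 0 := by
    intro n
    rw [if_congr (hcond n) rfl rfl]
    split
    · next hc =>
      have hn : (0:ℝ) < n := by exact_mod_cast lt_of_lt_of_le hn0pos hc
      field_simp
    · ring
  rw [Finset.sum_congr rfl (fun n _ => step1 n)]
  have hn0r : (0:ℝ) < n0 := by exact_mod_cast hn0pos
  calc ∑ n ∈ Finset.range (N+1), (if n0 ≤ n then 8/(n:ℝ)^3 else 0)
      ≤ 12/(n0:ℝ)^2 := tail_geom n0 hn0pos N
    _ ≤ 48 / K^2 := by
        rw [div_le_div_iff₀ (by positivity) (by positivity)]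
        nlinarith [hn0K, hK2]

lemma ball_sum_bound {R : ℝ} (hR : 2 ≤ R) :
    Summable (fun h : ℤ × ℤ => if h ≠ 0 ∧ znorm h ≤ R then 1/znorm h^2 else 0) ∧
    (∑' h : ℤ × ℤ, if h ≠ 0 ∧ znorm h ≤ R then 1/znorm h^2 else 0) ≤ 8 * (1 + Real.log R) := by
  classical
  set w : ℕ → ℝ := fun n => if 1 ≤ n ∧ (n:ℝ) ≤ R then 1/(n:ℝ)^2 else 0 with hw
  have hw0 : w 0 = 0 := by simp [hw]
  have hwnn : ∀ n, 0 ≤ w n := fun n => by rw [hw]; dsimp only; split <;> positivity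
  obtain ⟨hs, ht⟩ := radial_sum_bound w hw0 hwnn (harmonic_partial_bound hR)
  have hle : ∀ h : ℤ × ℤ, (if h ≠ 0 ∧ znorm h ≤ R then 1/znorm h^2 else 0) ≤ w (zr h) := by
    intro h
    split
    · next hc =>
      obtain ⟨h0, hR'⟩ := hc
      have h1 : 1 ≤ zr h := one_le_zr h0
      have h2 : (zr h : ℝ) ≤ znorm h := zr_le_znorm h
      have hcond : 1 ≤ zr h ∧ ((zr h : ℕ):ℝ) ≤ R := ⟨h1, le_trans h2 hR'⟩
      rw [hw]; dsimp only; rw [if_pos hcond]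
      have hzr : (0:ℝ) < (zr h : ℝ) := by exact_mod_cast h1
      apply div_le_div_of_nonneg_left (by norm_num) (by positivity)
      exact pow_le_pow_left₀ hzr.le h2 2
    · exact hwnn _
  have hnn : ∀ h : ℤ × ℤ, 0 ≤ (if h ≠ 0 ∧ znorm h ≤ R then 1/znorm h^2 else 0) := by
    intro h; split <;> positivity
  refine ⟨Summable.of_nonneg_of_le hnn hle hs, le_trans (Summable.tsum_le_tsum hle (Summable.of_nonneg_of_le hnn hle hs) hs) ht⟩

lemma tail_sum_bound {K : ℝ} (hK : 2 ≤ K) :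
    Summable (fun h : ℤ × ℤ => if K < znorm h then 1/znorm h^4 else 0) ∧
    (∑' h : ℤ × ℤ, if K < znorm h then 1/znorm h^4 else 0) ≤ 48 / K^2 := by
  classical
  set w : ℕ → ℝ := fun n => if K/2 < (n:ℝ) then 1/(n:ℝ)^4 else 0 with hw
  have hw0 : w 0 = 0 := by
    rw [hw]; dsimp only; rw [if_neg]; push_cast; linarith
  have hwnn : ∀ n, 0 ≤ w n := fun n => by rw [hw]; dsimp only; split <;> positivity
  obtain ⟨hs, ht⟩ := radial_sum_bound w hw0 hwnn (tail_partial_bound hK)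
  have hle : ∀ h : ℤ × ℤ, (if K < znorm h then 1/znorm h^4 else 0) ≤ w (zr h) := by
    intro h
    split
    · next hc =>
      have h0 : h ≠ 0 := by
        intro he; rw [he, znorm_zero] at hc; linarith
      have h2 : (zr h : ℝ) ≤ znorm h := zr_le_znorm h
      have h3 : K/2 < ((zr h : ℕ):ℝ) := by
        have := znorm_le_two_zr h
        linarith
      rw [hw]; dsimp only; rw [if_pos h3]
      have hzr : (0:ℝ) < (zr h : ℝ) := by exact_mod_cast one_le_zr h0
      apply div_le_div_of_nonneg_left (by norm_num) (by positivity)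
      exact pow_le_pow_left₀ hzr.le h2 4
    · exact hwnn _
  have hnn : ∀ h : ℤ × ℤ, 0 ≤ (if K < znorm h then 1/znorm h^4 else 0) := by
    intro h; split <;> positivity
  refine ⟨Summable.of_nonneg_of_le hnn hle hs, le_trans (Summable.tsum_le_tsum hle (Summable.of_nonneg_of_le hnn hle hs) hs) ht⟩

/-- the lattice convolution series is bounded by `c log|k| / |k|^2`. -/
theorem lattice_convolution_log_bound :
    ∃ c : ℝ, 0 < c ∧ ∀ k : ℤ × ℤ, 2 ≤ znorm k →
      (Summable fun h : ℤ × ℤ =>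
        if h ≠ 0 ∧ h ≠ k then 1 / (znorm h ^ 2 * znorm (k - h) ^ 2) else 0) ∧
      (∑' h : ℤ × ℤ,
        if h ≠ 0 ∧ h ≠ k then 1 / (znorm h ^ 2 * znorm (k - h) ^ 2) else 0)
        ≤ c * Real.log (znorm k) / znorm k ^ 2 := by
  classical
  have log2pos : (0:ℝ) < Real.log 2 := Real.log_pos (by norm_num)
  have log3pos : (0:ℝ) < Real.log 3 := Real.log_pos (by norm_num)
  set A : ℝ := 64*(1+Real.log 3)+192 with hA
  have hApos : 0 < A := by rw [hA]; linarith
  refine ⟨A/Real.log 2 + 64, by positivity, fun k hk => ?_⟩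
  set K := znorm k with hKdef
  have hKpos : (0:ℝ) < K := by linarith
  have h3K : (2:ℝ) ≤ 3*K := by linarith
  set F : (ℤ × ℤ) → ℝ := fun h =>
    if h ≠ 0 ∧ h ≠ k then 1 / (znorm h ^ 2 * znorm (k - h) ^ 2) else 0 with hF
  set g : (ℤ × ℤ) → ℝ := fun h => if h ≠ 0 ∧ znorm h ≤ 3*K then 1/znorm h^2 else 0 with hg
  set t : (ℤ × ℤ) → ℝ := fun h => if K < znorm h then 1/znorm h^4 else 0 with htd
  obtain ⟨hgs, hgt⟩ := ball_sum_bound h3K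
  obtain ⟨hts, htt⟩ := tail_sum_bound hk
  have hgnn : ∀ h, 0 ≤ g h := fun h => by rw [hg]; dsimp only; split <;> positivity
  have htnn : ∀ h, 0 ≤ t h := fun h => by rw [htd]; dsimp only; split <;> positivity
  -- reflected version
  have hgs' : Summable (fun h => g (k - h)) := by
    have := (Equiv.subLeft k).summable_iff (f := g)
    exact this.mpr hgs
  have hgt' : (∑' h : ℤ × ℤ, g (k - h)) = ∑' h : ℤ × ℤ, g h := (Equiv.subLeft k).tsum_eq g
  -- majorant
  set GH : (ℤ × ℤ) → ℝ := fun h => (4/K^2) * (g h + g (k - h)) + 4 * t h with hGH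
  have hGHs : Summable GH := ((hgs.add hgs').mul_left _).add (hts.mul_left 4)
  have hFnn : ∀ h, 0 ≤ F h := fun h => by rw [hF]; dsimp only; split <;> positivity
  -- triangle facts
  have key : ∀ h : ℤ × ℤ, F h ≤ GH h := by
    intro h
    rw [hF, hGH]; dsimp only
    by_cases hc : h ≠ 0 ∧ h ≠ k
    · rw [if_pos hc]
      obtain ⟨h0, hnek⟩ := hc
      have hkh0 : k - h ≠ 0 := sub_ne_zero.mpr (Ne.symm hnek)
      set a := znorm h with ha
      set b := znorm (k - h) with hb
      have ha1 : 1 ≤ a := one_le_znorm h0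
      have hb1 : 1 ≤ b := one_le_znorm hkh0
      have T1 : K ≤ a + b := by
        have := znorm_triangle h (k - h)
        rwa [add_sub_cancel] at this
      have T2 : b ≤ K + a := by
        have := znorm_triangle k (-h)
        rwa [← sub_eq_add_neg, znorm_neg] at this
      have T3 : a ≤ K + b := by
        have := znorm_triangle k (-(k-h))
        rw [znorm_neg, ← sub_eq_add_neg, sub_sub_cancel] at this
        exact this
      have hgnnh := hgnn h
      have hgnnkh := hgnn (k - h)
      have htnnh := htnn h
      by_cases hcase : a ≤ 2*K
      · -- both g-terms available
        have hga : g h = 1/a^2 := by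
          rw [hg]; dsimp only; rw [if_pos ⟨h0, by linarith⟩]
        have hgb : g (k - h) = 1/b^2 := by
          rw [hg]; dsimp only; rw [if_pos ⟨hkh0, by linarith⟩]
        by_cases hsub : K/2 ≤ a
        · have step : 1 / (a^2 * b^2) ≤ (4/K^2) * (1/b^2) := by
            have e : (4/K^2) * (1/b^2) = 4/(K^2*b^2) := by ring
            rw [e, div_le_div_iff₀ (by positivity) (by positivity)]
            have hKa : (0:ℝ) ≤ 4*a^2 - K^2 := by nlinarith
            nlinarith [mul_nonneg hKa (sq_nonneg b)]
          have : (4/K^2) * (1/b^2) ≤ (4/K^2) * (g h + g (k-h)) + 4 * t h := by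
            rw [hga, hgb]
            have h4K : 0 ≤ 4/K^2 := by positivity
            nlinarith
          linarith
        · push_neg at hsub
          have hbK : K/2 ≤ b := by linarith
          have step : 1 / (a^2 * b^2) ≤ (4/K^2) * (1/a^2) := by
            have e : (4/K^2) * (1/a^2) = 4/(K^2*a^2) := by ring
            rw [e, div_le_div_iff₀ (by positivity) (by positivity)]
            have hKb : (0:ℝ) ≤ 4*b^2 - K^2 := by nlinarith
            nlinarith [mul_nonneg hKb (sq_nonneg a)]
          have : (4/K^2) * (1/a^2) ≤ (4/K^2) * (g h + g (k-h)) + 4 * t h := by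
            rw [hga, hgb]
            have h4K : 0 ≤ 4/K^2 := by positivity
            nlinarith
          linarith
      · push_neg at hcase
        have hta : t h = 1/a^4 := by
          rw [htd]; dsimp only; rw [if_pos (by linarith)]
        have hba : a/2 ≤ b := by linarith
        have step : 1 / (a^2 * b^2) ≤ 4 * (1/a^4) := by
          have e : 4 * (1/a^4) = 4/(a^4) := by ring
          rw [e, div_le_div_iff₀ (by positivity) (by positivity)]
          have hb2 : a^2/4 ≤ b^2 := by nlinarith
          nlinarith [mul_le_mul_of_nonneg_left hb2 (by positivity : (0:ℝ) ≤ 4*a^2)]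
        have hGnn : 0 ≤ (4/K^2) * (g h + g (k-h)) := by positivity
        rw [hta] at *
        linarith
    · rw [if_neg hc]
      have := hgnn h; have := hgnn (k - h); have := htnn h
      positivity
  have hFs : Summable F := Summable.of_nonneg_of_le hFnn key hGHs
  refine ⟨hFs, ?_⟩
  have step1 : (∑' h, F h) ≤ ∑' h, GH h := Summable.tsum_le_tsum key hFs hGHs
  have step2 : (∑' h, GH h) = (4/K^2) * ((∑' h, g h) + ∑' h, g (k - h)) + 4 * ∑' h, t h := by
    rw [hGH]
    rw [Summable.tsum_add ((hgs.add hgs').mul_left _) (hts.mul_left 4), tsum_mul_left, tsum_mul_left,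
      Summable.tsum_add hgs hgs']
  have hlog3K : Real.log (3*K) = Real.log 3 + Real.log K :=
    Real.log_mul (by norm_num) (by positivity)
  have hgtb : (∑' h, g h) ≤ 8 * (1 + Real.log 3 + Real.log K) := by
    have := hgt
    rw [hlog3K] at this
    linarith
  have step3 : (∑' h, GH h) ≤ (A + 64 * Real.log K) / K^2 := by
    rw [step2, hgt']
    have h4K : 0 ≤ 4/K^2 := by positivity
    have hsum : (∑' h, g h) + (∑' h, g h) ≤ 16 * (1 + Real.log 3 + Real.log K) := by linarith
    have e1 : (4/K^2) * ((∑' h, g h) + ∑' h, g h) ≤ (4/K^2) * (16 * (1 + Real.log 3 + Real.log K)) := by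
      apply mul_le_mul_of_nonneg_left hsum h4K
    have e2 : (4:ℝ) * ∑' h, t h ≤ 4 * (48/K^2) := by linarith
    have e3 : (4/K^2) * (16 * (1 + Real.log 3 + Real.log K)) + 4 * (48/K^2)
        = (A + 64 * Real.log K) / K^2 := by
      rw [hA]; field_simp; ring
    linarith
  have hL : Real.log 2 ≤ Real.log K := Real.log_le_log (by norm_num) hk
  have final : A + 64 * Real.log K ≤ (A/Real.log 2 + 64) * Real.log K := by
    have : A = (A/Real.log 2) * Real.log 2 := by field_simp
    nlinarith [div_nonneg hApos.le log2pos.le]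
  calc (∑' h, F h) ≤ (A + 64 * Real.log K) / K^2 := le_trans step1 step3
    _ ≤ ((A/Real.log 2 + 64) * Real.log K) / K^2 :=
        (div_le_div_iff_of_pos_right (by positivity)).mpr final
end

section
/- For $m \geq 2$, $\int_{1/\sqrt{2}}^{\infty} \frac{1}{m^2 + 4y^2} \cdot \frac{\pi}{y}\, dy \leq \pi \frac{\log(\sqrt{2} m)}{m^2 + 2} + \frac{\pi^2}{4 m^2}$. -/
open MeasureTheory Real Set

/-- tail integral estimate. -/
theorem tail_integral_estimate (m : ℝ) (hm : 2 ≤ m) :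
    (∫ y in Set.Ioi (1 / Real.sqrt 2), (1 / (m^2 + 4 * y^2)) * (π / y))
      ≤ π * Real.log (Real.sqrt 2 * m) / (m^2 + 2) + π^2 / (4 * m^2) := by
  have hm0 : (0:ℝ) < m := by linarith
  set a : ℝ := 1 / Real.sqrt 2 with ha
  have hs2 : (1:ℝ) ≤ Real.sqrt 2 := by
    rw [show (1:ℝ) = Real.sqrt 1 by simp]
    exact Real.sqrt_le_sqrt (by norm_num)
  have hs2' : (0:ℝ) < Real.sqrt 2 := by positivity
  have ha0 : 0 < a := by positivity
  have ham : a ≤ m := by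
    have : a ≤ 1 := by rw [ha, div_le_one (by positivity)]; exact hs2
    linarith
  have hsq : a ^ 2 = 1 / 2 := by
    rw [ha, div_pow, one_pow, Real.sq_sqrt (by norm_num : (0:ℝ) ≤ 2)]
  set f : ℝ → ℝ := fun y => (1 / (m^2 + 4 * y^2)) * (π / y) with hf
  have hrpow : ∀ y : ℝ, 0 < y → y ^ (-3:ℝ) = (y^3)⁻¹ := by
    intro y hy
    rw [Real.rpow_neg hy.le, show (3:ℝ) = ((3:ℕ):ℝ) by norm_num, Real.rpow_natCast]
  -- pointwise bound by π/4 * y^(-3)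
  have hbound : ∀ y : ℝ, 0 < y → f y ≤ (π/4) * y ^ (-3:ℝ) := by
    intro y hy
    have h3 : (0:ℝ) < y^3 := by positivity
    rw [hrpow y hy]
    calc f y = π / (y * (m^2 + 4*y^2)) := by
          show (1 / (m^2 + 4 * y^2)) * (π / y) = _
          rw [div_mul_div_comm, one_mul, mul_comm y]
      _ ≤ π / (4 * y^3) := by
          apply div_le_div_of_nonneg_left Real.pi_pos.le (by positivity)
          nlinarith [sq_nonneg m]
      _ = (π/4) * (y^3)⁻¹ := by field_simp
  have hfnn : ∀ y : ℝ, 0 < y → 0 ≤ f y := by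
    intro y hy; rw [hf]
    have : (0:ℝ) < m^2 + 4*y^2 := by positivity
    positivity
  -- integrability on Ioi a
  have hcont : ∀ s : Set ℝ, s ⊆ Set.Ioi (0:ℝ) → ContinuousOn f s := by
    intro s hs
    apply ContinuousOn.mul
    · apply ContinuousOn.div continuousOn_const (by fun_prop)
      intro y hy
      have := hs hy
      simp only [Set.mem_Ioi] at this
      positivity
    · exact ContinuousOn.div continuousOn_const continuousOn_id
        (fun y hy => ne_of_gt (hs hy))
  have hg : IntegrableOn (fun y : ℝ => (π/4) * y ^ (-3:ℝ)) (Set.Ioi a) :=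
    (integrableOn_Ioi_rpow_of_lt (by norm_num) ha0).const_mul _
  have hIoisub : Set.Ioi a ⊆ Set.Ioi (0:ℝ) := Set.Ioi_subset_Ioi ha0.le
  have hInt : IntegrableOn f (Set.Ioi a) := by
    apply Integrable.mono' hg
      ((hcont _ hIoisub).aestronglyMeasurable measurableSet_Ioi)
    filter_upwards [ae_restrict_mem measurableSet_Ioi] with y hy
    have hy0 : 0 < y := ha0.trans hy
    rw [Real.norm_of_nonneg (hfnn y hy0)]
    exact hbound y hy0
  -- split the integral
  have hsplit : (∫ y in Set.Ioi a, f y)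
      = (∫ y in Set.Ioc a m, f y) + (∫ y in Set.Ioi m, f y) := by
    rw [← setIntegral_union (Set.Ioc_disjoint_Ioi le_rfl) measurableSet_Ioi
        (hInt.mono_set Set.Ioc_subset_Ioi_self)
        (hInt.mono_set (Set.Ioi_subset_Ioi ham)),
      Set.Ioc_union_Ioi_eq_Ioi ham]
  -- part 1
  have h1 : (∫ y in Set.Ioc a m, f y) ≤ π * Real.log (Real.sqrt 2 * m) / (m^2+2) := by
    have h2pos : (0:ℝ) < m^2 + 2 := by positivity
    have hint2 : IntegrableOn (fun y : ℝ => (π/(m^2+2)) * (1/y)) (Set.Ioc a m) := by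
      apply IntegrableOn.mono_set _ Set.Ioc_subset_Icc_self
      apply ContinuousOn.integrableOn_Icc
      apply ContinuousOn.mul continuousOn_const
      apply ContinuousOn.div continuousOn_const continuousOn_id
      intro y hy
      exact ne_of_gt (ha0.trans_le hy.1)
    have hle : ∀ y ∈ Set.Ioc a m, f y ≤ (π/(m^2+2)) * (1/y) := by
      intro y hy
      have hy0 : 0 < y := ha0.trans hy.1
      have hy2 : 2 ≤ 4 * y^2 := by nlinarith [hy.1, hsq]
      rw [hf]
      have : (1:ℝ) / (m^2 + 4*y^2) ≤ 1 / (m^2+2) := by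
        apply div_le_div_of_nonneg_left one_pos.le h2pos
        linarith
      calc (1 / (m^2 + 4 * y^2)) * (π / y) ≤ (1/(m^2+2)) * (π/y) := by
            apply mul_le_mul_of_nonneg_right this (by positivity)
        _ = (π/(m^2+2)) * (1/y) := by ring
    calc (∫ y in Set.Ioc a m, f y) ≤ ∫ y in Set.Ioc a m, (π/(m^2+2)) * (1/y) :=
          setIntegral_mono_on (hInt.mono_set Set.Ioc_subset_Ioi_self) hint2
            measurableSet_Ioc hle
      _ = π * Real.log (Real.sqrt 2 * m) / (m^2+2) := by
          rw [← intervalIntegral.integral_of_le ham,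
            intervalIntegral.integral_const_mul, integral_one_div]
          · have hma : m / a = Real.sqrt 2 * m := by
              rw [ha]; field_simp
            rw [hma]; ring
          · rw [Set.uIcc_of_le ham]
            rintro ⟨h1', _⟩
            linarith
  -- part 2
  have h2 : (∫ y in Set.Ioi m, f y) ≤ π^2 / (4*m^2) := by
    calc (∫ y in Set.Ioi m, f y) ≤ ∫ y in Set.Ioi m, (π/4) * y ^ (-3:ℝ) := by
          apply setIntegral_mono_on (hInt.mono_set (Set.Ioi_subset_Ioi ham))
            (hg.mono_set (Set.Ioi_subset_Ioi ham)) measurableSet_Ioi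
          intro y hy
          exact hbound y (hm0.trans hy)
      _ = (π/4) * (-m ^ ((-3:ℝ)+1) / ((-3:ℝ)+1)) := by
          rw [MeasureTheory.integral_const_mul, integral_Ioi_rpow_of_lt (by norm_num) hm0]
      _ ≤ π^2 / (4*m^2) := by
          have : m ^ ((-3:ℝ)+1) = (m^2)⁻¹ := by
            norm_num
          rw [this]
          have hm2 : (0:ℝ) < m^2 := by positivity
          have hπ := Real.pi_gt_three
          rw [show π/4 * (-(m^2)⁻¹/((-3:ℝ)+1)) = π/(8*m^2) by field_simp; ring]
          rw [div_le_div_iff₀ (by positivity) (by positivity)]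
          nlinarith [mul_le_mul_of_nonneg_right (show π*4 ≤ π^2*8 by nlinarith) hm2.le]
  calc (∫ y in Set.Ioi a, f y) = _ + _ := hsplit
    _ ≤ π * Real.log (Real.sqrt 2 * m) / (m^2+2) + π^2/(4*m^2) := add_le_add h1 h2
end
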